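/- arXiv:2304.06317 — 4 statements merged into one kernel-verified Lean document; each statement's English description precedes it below -/
import Mathlib

section
/- Let G be a finite connected simple graph on n ≥ 1 vertices with diameter D, and let k ≥ 1 be an integer. If T_k(G) ≠ D, then D·k ≤ 3·n·T_k(G)² (equivalently, sqrt((D/(3n))·k) ≤ T_k(G)). -/
open SimpleGraph

/-- The ball of radius `t` around `v`: all vertices at hop distance at most `t` from `v`. -/
def SimpleGraph.hopBall {V : Type*} (G : SimpleGraph V) (v : V) (t : ℕ) : Set V :=
  {w | G.dist v w ≤ t}

/-- The broadcast quality of a vertex `v`: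
`T_k(v) = min ({t : t ≥ 1 and t·|B_t(v)| ≥ k} ∪ {D})` where `D` is the diameter. -/
noncomputable def SimpleGraph.broadcastQuality {V : Type*} (G : SimpleGraph V) (k : ℕ)
    (v : V) : ℕ :=
  sInf ({t : ℕ | 1 ≤ t ∧ k ≤ t * (G.hopBall v t).ncard} ∪ {G.diam})

/-- The broadcast quality of the graph: `T_k(G) = max_v T_k(v)`. -/
noncomputable def SimpleGraph.broadcastQualityGraph {V : Type*} [Fintype V]
    (G : SimpleGraph V) (k : ℕ) : ℕ :=
  Finset.univ.sup (fun v => G.broadcastQuality k v)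

lemma length_drop'' {V : Type*} {G : SimpleGraph V} {u v : V} (p : G.Walk u v) (n : ℕ) :
    (p.drop n).length = p.length - n := by
  induction p generalizing n with
  | nil => cases n <;> simp [SimpleGraph.Walk.drop]
  | cons h q ih =>
    cases n with
    | zero => simp [SimpleGraph.Walk.drop]
    | succ n => simp [SimpleGraph.Walk.drop, ih]

lemma dist_getVert_right {V : Type*} {G : SimpleGraph V} {u v : V} (p : G.Walk u v) (i : ℕ) :
    G.dist (p.getVert i) v ≤ p.length - i := by
  have := SimpleGraph.dist_le (p.drop i)
  rwa [length_drop''] at this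

lemma dist_getVert_left {V : Type*} {G : SimpleGraph V} {u v : V} (p : G.Walk u v) (i : ℕ)
    (hi : i ≤ p.length) : G.dist u (p.getVert i) ≤ i := by
  have h1 : p.reverse.getVert (p.length - i) = p.getVert i := by
    rw [SimpleGraph.Walk.getVert_reverse]
    congr 1; omega
  have := dist_getVert_right p.reverse (p.length - i)
  rw [h1, SimpleGraph.Walk.length_reverse] at this
  rw [SimpleGraph.dist_comm]
  omega

theorem lower_bound_on_Tk {V : Type*} [Fintype V] [Nonempty V] (G : SimpleGraph V)
    (hconn : G.Connected) (k : ℕ) (hk : 1 ≤ k)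
    (hne : G.broadcastQualityGraph k ≠ G.diam) :
    G.diam * k ≤ 3 * Fintype.card V * (G.broadcastQualityGraph k) ^ 2 := by
  classical
  set T := G.broadcastQualityGraph k with hT
  set D := G.diam with hD
  have hTvD : ∀ v : V, G.broadcastQuality k v ≤ D := fun v => Nat.sInf_le (Or.inr rfl)
  have hTD : T ≤ D := Finset.sup_le fun v _ => hTvD v
  have hTltD : T < D := lt_of_le_of_ne hTD hne
  have hle : ∀ v : V, G.broadcastQuality k v ≤ T :=
    fun v => Finset.le_sup (f := fun v => G.broadcastQuality k v) (Finset.mem_univ v)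
  have hTv : ∀ v : V, 1 ≤ G.broadcastQuality k v ∧
      k ≤ (G.broadcastQuality k v) * (G.hopBall v (G.broadcastQuality k v)).ncard := by
    intro v
    have hmem : G.broadcastQuality k v ∈
        ({t : ℕ | 1 ≤ t ∧ k ≤ t * (G.hopBall v t).ncard} ∪ {D} : Set ℕ) :=
      Nat.sInf_mem ⟨D, Or.inr rfl⟩
    rcases hmem with h | h
    · exact h
    · exfalso
      have := hle v
      rw [Set.mem_singleton_iff] at h
      omega
  have hT1 : 1 ≤ T := le_trans (hTv (Classical.arbitrary V)).1 (hle _)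
  have hkey : ∀ v : V, k ≤ T * (G.hopBall v T).ncard := by
    intro v
    have h1 := (hTv v).2
    have hsub : G.hopBall v (G.broadcastQuality k v) ⊆ G.hopBall v T :=
      fun w hw => le_trans hw (hle v)
    have hcard : (G.hopBall v (G.broadcastQuality k v)).ncard ≤ (G.hopBall v T).ncard :=
      Set.ncard_le_ncard hsub (Set.toFinite _)
    exact le_trans h1 (Nat.mul_le_mul (hle v) hcard)
  obtain ⟨u, w, huw⟩ := G.exists_dist_eq_diam
  obtain ⟨p, hp⟩ := hconn.exists_walk_length_eq_dist u w
  have hL : p.length = D := by rw [hp, huw]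
  set q := 2 * T + 1 with hq
  set m := D / q + 1 with hm
  set c : ℕ → V := fun i => p.getVert (i * q) with hc
  have hidx : ∀ i, i < m → i * q ≤ p.length := by
    intro i hi
    have : i ≤ D / q := by omega
    have h2 : i * q ≤ (D / q) * q := Nat.mul_le_mul_right q this
    have h3 : (D / q) * q ≤ D := Nat.div_mul_le_self D q
    omega
  have hdistc : ∀ i j, i < j → j < m → q ≤ G.dist (c i) (c j) := by
    intro i j hij hj
    have h1 : G.dist u (c i) ≤ i * q := dist_getVert_left p _ (hidx i (by omega))
    have h2 : G.dist (c j) w ≤ p.length - j * q := dist_getVert_right p _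
    have h3 : j * q ≤ p.length := hidx j hj
    have htri : G.dist u w ≤ G.dist u (c i) + (G.dist (c i) (c j) + G.dist (c j) w) :=
      le_trans (hconn.dist_triangle (v := c i))
        (by gcongr; exact hconn.dist_triangle (v := c j))
    have hmul : i * q + q ≤ j * q := by
      calc i * q + q = (i + 1) * q := by ring
        _ ≤ j * q := Nat.mul_le_mul_right q (by omega)
    rw [huw, ← hD] at htri
    rw [hL] at h2 h3
    omega
  set F : ℕ → Finset V := fun i => (Set.toFinite (G.hopBall (c i) T)).toFinset with hF
  have hcardF : ∀ i, (F i).card = (G.hopBall (c i) T).ncard := by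
    intro i
    rw [hF, Set.ncard_eq_toFinset_card _ (Set.toFinite _)]
  have hdisj : ∀ i ∈ Finset.range m, ∀ j ∈ Finset.range m, i ≠ j → Disjoint (F i) (F j) := by
    intro i hi j hj hij
    rw [Finset.disjoint_left]
    intro x hxi hxj
    simp only [hF, Set.Finite.mem_toFinset] at hxi hxj
    have hxi' : G.dist (c i) x ≤ T := hxi
    have hxj' : G.dist (c j) x ≤ T := hxj
    have htri : G.dist (c i) (c j) ≤ G.dist (c i) x + G.dist x (c j) := hconn.dist_triangle
    rw [SimpleGraph.dist_comm (u := x) (v := c j)] at htri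
    simp only [Finset.mem_range] at hi hj
    rcases Nat.lt_or_ge i j with h | h
    · have := hdistc i j h hj; omega
    · have := hdistc j i (by omega) hi
      rw [SimpleGraph.dist_comm] at this
      omega
  have hsum : m * k ≤ T * Fintype.card V := by
    have h1 : m * k ≤ ∑ i ∈ Finset.range m, T * (F i).card := by
      calc m * k = ∑ _i ∈ Finset.range m, k := by
            simp [Finset.sum_const, Nat.mul_comm]
        _ ≤ _ := Finset.sum_le_sum fun i _ => by rw [hcardF]; exact hkey (c i)
    have h2 : ∑ i ∈ Finset.range m, T * (F i).card = T * ∑ i ∈ Finset.range m, (F i).card := by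
      rw [Finset.mul_sum]
    have h3 : ∑ i ∈ Finset.range m, (F i).card = ((Finset.range m).biUnion F).card :=
      (Finset.card_biUnion hdisj).symm
    have h4 : ((Finset.range m).biUnion F).card ≤ Fintype.card V := Finset.card_le_univ _
    calc m * k ≤ _ := h1
      _ = T * ∑ i ∈ Finset.range m, (F i).card := h2
      _ ≤ T * Fintype.card V := by rw [h3]; exact Nat.mul_le_mul_left T h4
  have hDq : D < m * q := by
    have h1 : q * (D / q) + D % q = D := Nat.div_add_mod D q
    have h2 : D % q < q := Nat.mod_lt _ (by omega)
    have h3 : m * q = q * (D / q) + q := by rw [hm]; ring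
    omega
  calc D * k ≤ (m * q) * k := Nat.mul_le_mul_right k (le_of_lt hDq)
    _ = q * (m * k) := by ring
    _ ≤ q * (T * Fintype.card V) := Nat.mul_le_mul_left q hsum
    _ ≤ (3 * T) * (T * Fintype.card V) := Nat.mul_le_mul_right _ (by omega)
    _ = 3 * Fintype.card V * T ^ 2 := by ring
end

section
/- Let G be a finite connected simple graph on n ≥ 1 vertices with diameter D, and let k ≥ 1 be an integer. Then T_k(G) ≤ min{D, ⌈√k⌉}; in particular T_k(G) ≤ ⌈√k⌉. -/
open SimpleGraph

private lemma dist_getVert_le {V : Type*} {G : SimpleGraph V} (hconn : G.Connected) {u w : V}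
    (p : G.Walk u w) (i : ℕ) : G.dist u (p.getVert i) ≤ i := by
  induction p generalizing i with
  | nil => simp [SimpleGraph.Walk.getVert, SimpleGraph.dist_self]
  | @cons a b c h q ih =>
    match i with
    | 0 => simp [SimpleGraph.Walk.getVert, SimpleGraph.dist_self]
    | (i + 1) =>
      rw [SimpleGraph.Walk.getVert_cons_succ]
      calc G.dist a (q.getVert i) ≤ G.dist a b + G.dist b (q.getVert i) :=
            hconn.dist_triangle
        _ ≤ 1 + i := by
            have h1 : G.dist a b ≤ 1 := by
              simpa using G.dist_le (SimpleGraph.Walk.cons h SimpleGraph.Walk.nil)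
            exact Nat.add_le_add h1 (ih i)
        _ = i + 1 := Nat.add_comm 1 i

private lemma dist_getVert_right_le {V : Type*} {G : SimpleGraph V} {u w : V}
    (p : G.Walk u w) (i : ℕ) : G.dist (p.getVert i) w ≤ p.length - i := by
  induction p generalizing i with
  | nil => simp [SimpleGraph.Walk.getVert]
  | @cons a b c h q ih =>
    match i with
    | 0 =>
      simpa [SimpleGraph.Walk.getVert] using G.dist_le (SimpleGraph.Walk.cons h q)
    | (i + 1) =>
      rw [SimpleGraph.Walk.getVert_cons_succ]
      simpa using ih i

private lemma exists_dist_eq' {V : Type*} {G : SimpleGraph V}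
    (hconn : G.Connected) (u w : V) {i : ℕ} (h : i ≤ G.dist u w) :
    ∃ x, G.dist u x = i := by
  obtain ⟨p, hp⟩ := hconn.exists_walk_length_eq_dist u w
  refine ⟨p.getVert i, le_antisymm (dist_getVert_le hconn p i) ?_⟩
  have h1 := dist_getVert_right_le p i
  have h2 : G.dist u w ≤ G.dist u (p.getVert i) + G.dist (p.getVert i) w :=
    hconn.dist_triangle
  omega

private lemma ball_card_ge {V : Type*} [Fintype V] {G : SimpleGraph V}
    (hconn : G.Connected) (a b : V) {t : ℕ} (h : t ≤ G.dist a b) :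
    t + 1 ≤ (G.hopBall a t).ncard := by
  choose f hf using fun i : Fin (t + 1) =>
    exists_dist_eq' hconn a b (le_trans (Nat.le_of_lt_succ i.2) h)
  have hinj : Function.Injective f := by
    intro i j hij
    have := hf i
    rw [hij, hf j] at this
    exact Fin.ext this.symm
  have hsub : Set.range f ⊆ G.hopBall a t := by
    rintro x ⟨i, rfl⟩
    simp only [SimpleGraph.hopBall, Set.mem_setOf_eq, hf i]
    exact Nat.le_of_lt_succ i.2
  calc t + 1 = (Set.range f).ncard := by
        rw [← Nat.card_coe_set_eq, Nat.card_range_of_injective hinj]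
        simp
    _ ≤ (G.hopBall a t).ncard := Set.ncard_le_ncard hsub (Set.toFinite _)

theorem upper_bound_on_Tk {V : Type*} [Fintype V] [Nonempty V] (G : SimpleGraph V)
    (hconn : G.Connected) (k : ℕ) (hk : 1 ≤ k) :
    G.broadcastQualityGraph k ≤ min G.diam ⌈Real.sqrt k⌉₊ := by
  apply Finset.sup_le
  intro v _
  unfold SimpleGraph.broadcastQuality
  set t : ℕ := ⌈Real.sqrt k⌉₊ with ht
  rcases le_or_gt G.diam t with hle | hlt
  · have : G.diam ∈ ({s : ℕ | 1 ≤ s ∧ k ≤ s * (G.hopBall v s).ncard} ∪ {G.diam}) :=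
      Or.inr rfl
    exact le_min (Nat.sInf_le this) ((Nat.sInf_le this).trans hle)
  · -- t < diam ; show t is in the left set
    have ht1 : 1 ≤ t := by
      rw [ht]
      apply Nat.one_le_ceil_iff.mpr
      exact Real.sqrt_pos.mpr (by exact_mod_cast hk)
    have hkt : k ≤ t * t := by
      have h1 : Real.sqrt k ≤ (t : ℝ) := Nat.le_ceil _
      have h2 : (k : ℝ) ≤ (t : ℝ) * (t : ℝ) := by
        nlinarith [Real.sq_sqrt (show (0:ℝ) ≤ k by positivity), Real.sqrt_nonneg (k : ℝ)]
      exact_mod_cast h2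
    have hball : t ≤ (G.hopBall v t).ncard := by
      by_cases hx : ∃ b, t ≤ G.dist v b
      · obtain ⟨b, hb⟩ := hx
        exact le_trans (Nat.le_succ t) (ball_card_ge hconn v b hb)
      · push_neg at hx
        have huniv : G.hopBall v t = Set.univ := by
          ext x
          simp only [SimpleGraph.hopBall, Set.mem_setOf_eq, Set.mem_univ, iff_true]
          exact le_of_lt (hx x)
        obtain ⟨a, b, hab⟩ := G.exists_dist_eq_diam
        have hb : t ≤ G.dist a b := hab ▸ le_of_lt hlt
        have := ball_card_ge hconn a b hb
        have hsub : (G.hopBall a t).ncard ≤ (Set.univ : Set V).ncard :=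
          Set.ncard_le_ncard (Set.subset_univ _) (Set.toFinite _)
        rw [huniv]
        omega
    have hmem : t ∈ ({s : ℕ | 1 ≤ s ∧ k ≤ s * (G.hopBall v s).ncard} ∪ {G.diam}) :=
      Or.inl ⟨ht1, le_trans hkt (Nat.mul_le_mul_left t hball)⟩
    exact le_min ((Nat.sInf_le hmem).trans (le_of_lt hlt)) (Nat.sInf_le hmem)
end

section
/- Let P_n be the path graph on n ≥ 2 vertices and let k ≥ 1 be an integer. Let t* be the least positive integer t with t·(t+1) ≥ k. Then T_k(P_n) = min(n−1, t*). (In particular, T_k(P_n) = Θ(√k) when k = O(n²), and T_k(P_n) = D = n−1 when k > (n−1)² + (n−1).) -/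
open SimpleGraph

lemma pg_conn {n : ℕ} (hn : 1 ≤ n) : (pathGraph n).Connected := by
  cases n with
  | zero => omega
  | succ m => exact pathGraph_connected m

lemma pg_dist_le {n : ℕ} (a : Fin n) (d : ℕ) (h : a.val + d < n) :
    (pathGraph n).dist a ⟨a.val + d, h⟩ ≤ d := by
  induction d with
  | zero =>
    have : (⟨a.val + 0, h⟩ : Fin n) = a := Fin.ext (by simp)
    rw [this, SimpleGraph.dist_self]
  | succ d ih =>
    have h' : a.val + d < n := by omega
    have hadj : (pathGraph n).Adj ⟨a.val + d, h'⟩ ⟨a.val + (d + 1), h⟩ :=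
      pathGraph_adj.mpr (Or.inl (by simp; omega))
    have hconn : (pathGraph n).Connected := pg_conn (by omega)
    calc (pathGraph n).dist a ⟨a.val + (d + 1), h⟩
        ≤ (pathGraph n).dist a ⟨a.val + d, h'⟩
          + (pathGraph n).dist ⟨a.val + d, h'⟩ ⟨a.val + (d + 1), h⟩ := hconn.dist_triangle
      _ ≤ d + 1 := add_le_add (ih h') (le_of_eq (SimpleGraph.dist_eq_one_iff_adj.mpr hadj))

lemma pg_walk_lower {n : ℕ} {a b : Fin n} (p : (pathGraph n).Walk a b) :
    b.val ≤ a.val + p.length ∧ a.val ≤ b.val + p.length := by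
  induction p with
  | nil => simp
  | @cons u c w h p ih =>
    rw [pathGraph_adj] at h
    simp only [SimpleGraph.Walk.length_cons]
    omega

lemma pg_dist_eq {n : ℕ} (a b : Fin n) :
    (pathGraph n).dist a b = max a.val b.val - min a.val b.val := by
  have hn : 1 ≤ n := a.pos
  apply le_antisymm
  · rcases le_total a.val b.val with hab | hba
    · have h : a.val + (b.val - a.val) < n := by omega
      have he : (⟨a.val + (b.val - a.val), h⟩ : Fin n) = b := Fin.ext (by simp; omega)
      have := pg_dist_le a (b.val - a.val) h
      rw [he] at this
      omega
    · have h : b.val + (a.val - b.val) < n := by omega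
      have he : (⟨b.val + (a.val - b.val), h⟩ : Fin n) = a := Fin.ext (by simp; omega)
      have := pg_dist_le b (a.val - b.val) h
      rw [he, SimpleGraph.dist_comm] at this
      omega
  · obtain ⟨p, hp⟩ := ((pg_conn hn) a b).exists_walk_length_eq_dist
    have := pg_walk_lower p
    omega

lemma pg_diam {n : ℕ} (hn : 2 ≤ n) : (pathGraph n).diam = n - 1 := by
  have hc : (pathGraph n).Connected := pg_conn (by omega)
  have hd : ∀ u v : Fin n, (pathGraph n).edist u v = ((pathGraph n).dist u v : ℕ∞) := by
    intro u v
    have := SimpleGraph.edist_ne_top_iff_reachable.mpr (hc u v)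
    exact ((ENat.coe_toNat this).symm)
  have hediam : (pathGraph n).ediam = ((n - 1 : ℕ) : ℕ∞) := by
    apply le_antisymm
    · apply SimpleGraph.ediam_le_of_edist_le
      intro u v
      rw [hd]
      have h1 : (pathGraph n).dist u v ≤ n - 1 := by
        rw [pg_dist_eq]; have := u.isLt; have := v.isLt; omega
      exact_mod_cast h1
    · have h0 : (0 : ℕ) < n := by omega
      have h1 : n - 1 < n := by omega
      have : (pathGraph n).dist ⟨0, h0⟩ ⟨n - 1, h1⟩ = n - 1 := by
        rw [pg_dist_eq]; simp
      calc ((n - 1 : ℕ) : ℕ∞) = (pathGraph n).edist ⟨0, h0⟩ ⟨n - 1, h1⟩ := by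
            rw [hd, this]
        _ ≤ (pathGraph n).ediam := SimpleGraph.edist_le_ediam
  rw [SimpleGraph.diam, hediam, ENat.toNat_coe]

lemma pg_ball_ncard {n : ℕ} (hn : 1 ≤ n) (v : Fin n) (t : ℕ) :
    ((pathGraph n).hopBall v t).ncard = min (v.val + t) (n - 1) + 1 - (v.val - t) := by
  have hlo : v.val - t < n := by have := v.isLt; omega
  have hhi : min (v.val + t) (n - 1) < n := by omega
  have hset : (pathGraph n).hopBall v t =
      ↑(Finset.Icc (⟨v.val - t, hlo⟩ : Fin n) ⟨min (v.val + t) (n - 1), hhi⟩) := by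
    ext w
    have hw := w.isLt
    simp only [SimpleGraph.hopBall, Set.mem_setOf_eq, Finset.coe_Icc, Set.mem_Icc, Fin.le_def,
      pg_dist_eq]
    omega
  rw [hset, Set.ncard_coe_finset, Fin.card_Icc]

theorem pathGraph_Tk (n : ℕ) (hn : 2 ≤ n) (k : ℕ) (hk : 1 ≤ k)
    (tstar : ℕ) (ht1 : 1 ≤ tstar) (ht2 : k ≤ tstar * (tstar + 1))
    (htmin : ∀ t : ℕ, 1 ≤ t → k ≤ t * (t + 1) → tstar ≤ t) :
    (pathGraph n).broadcastQualityGraph k = min (n - 1) tstar := by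
  have hn1 : 1 ≤ n := by omega
  have hdiam := pg_diam hn
  -- upper bound for each vertex
  have hub : ∀ v : Fin n, (pathGraph n).broadcastQuality k v ≤ min (n - 1) tstar := by
    intro v
    rcases le_total tstar (n - 1) with h | h
    · -- tstar is in the set
      have hball : tstar + 1 ≤ ((pathGraph n).hopBall v tstar).ncard := by
        rw [pg_ball_ncard hn1]
        have := v.isLt
        omega
      have hmem : tstar ∈ ({t : ℕ | 1 ≤ t ∧ k ≤ t * ((pathGraph n).hopBall v t).ncard}
          ∪ {(pathGraph n).diam}) := by
        left
        exact ⟨ht1, le_trans ht2 (Nat.mul_le_mul_left tstar hball)⟩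
      calc (pathGraph n).broadcastQuality k v ≤ tstar := Nat.sInf_le hmem
        _ = min (n - 1) tstar := by omega
    · have hmem : (n - 1) ∈ ({t : ℕ | 1 ≤ t ∧ k ≤ t * ((pathGraph n).hopBall v t).ncard}
          ∪ {(pathGraph n).diam}) := by
        right
        simp [hdiam]
      calc (pathGraph n).broadcastQuality k v ≤ n - 1 := Nat.sInf_le hmem
        _ = min (n - 1) tstar := by omega
  -- lower bound at vertex 0
  have h0 : (0 : ℕ) < n := by omega
  have hlb : min (n - 1) tstar ≤ (pathGraph n).broadcastQuality k ⟨0, h0⟩ := by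
    apply le_csInf ⟨(pathGraph n).diam, Or.inr rfl⟩
    intro s hs
    rcases hs with ⟨hs1, hs2⟩ | hs
    · -- k ≤ s * ncard(ball 0 s) ≤ s * (s+1)
      have hball : ((pathGraph n).hopBall ⟨0, h0⟩ s).ncard ≤ s + 1 := by
        rw [pg_ball_ncard hn1]
        simp only [Fin.val_mk]
        omega
      have : k ≤ s * (s + 1) :=
        le_trans hs2 (Nat.mul_le_mul_left s hball)
      have := htmin s hs1 this
      omega
    · simp only [Set.mem_singleton_iff] at hs
      omega
  apply le_antisymm
  · exact Finset.sup_le fun v _ => hub v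
  · exact le_trans hlb (Finset.le_sup (Finset.mem_univ (⟨0, h0⟩ : Fin n)))
end

section
/- Let G be the d-dimensional square grid graph with side length m (d ≥ 1, m ≥ 2), let 0 be the all-zeros corner vertex, and let k ≥ 1 be an integer. Suppose there exists a positive integer t < m with t·C(t+d, d) ≥ k, and let t* be the least such t. Then T_k(0) = t*. -/
open SimpleGraph

/-- The `d`-dimensional square grid graph with side length `m`: vertices are functions
`Fin d → Fin m`, and `x`, `y` are adjacent iff they differ by exactly one in exactly one
coordinate and agree elsewhere. -/
def gridGraph (d m : ℕ) : SimpleGraph (Fin d → Fin m) where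
  Adj x y := ∃ i : Fin d,
    (((x i : ℕ) + 1 = (y i : ℕ)) ∨ ((y i : ℕ) + 1 = (x i : ℕ))) ∧ ∀ j : Fin d, j ≠ i → x j = y j
  symm := by
    constructor
    rintro x y ⟨i, h1, h2⟩
    exact ⟨i, h1.symm, fun j hj => (h2 j hj).symm⟩
  loopless := by
    constructor
    rintro x ⟨i, h1, -⟩
    omega

lemma my_adj_sum {d m : ℕ} {x y : Fin d → Fin m} (h : (gridGraph d m).Adj x y) :
    (∑ i, (x i : ℕ)) + 1 = ∑ i, (y i : ℕ) ∨ (∑ i, (y i : ℕ)) + 1 = ∑ i, (x i : ℕ) := by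
  obtain ⟨i, h1, h2⟩ := h
  have hx := Fintype.sum_eq_add_sum_compl i (fun j => (x j : ℕ))
  have hy := Fintype.sum_eq_add_sum_compl i (fun j => (y j : ℕ))
  have he : ∑ j ∈ ({i}ᶜ : Finset (Fin d)), (x j : ℕ) = ∑ j ∈ ({i}ᶜ : Finset (Fin d)), (y j : ℕ) :=
    Finset.sum_congr rfl (fun j hj => by rw [h2 j (by simpa using hj)])
  omega

lemma my_walk_sum_le {d m : ℕ} {x y : Fin d → Fin m} (p : (gridGraph d m).Walk x y) :
    (∑ i, (y i : ℕ)) ≤ (∑ i, (x i : ℕ)) + p.length := by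
  induction p with
  | nil => simp
  | cons h p ih =>
    have := my_adj_sum h
    rw [SimpleGraph.Walk.length_cons]
    omega

lemma my_exists_walk {d m : ℕ} (hm : 0 < m) : ∀ (n : ℕ) (w : Fin d → Fin m),
    (∑ i, (w i : ℕ)) = n →
    ∃ p : (gridGraph d m).Walk (fun _ => ⟨0, hm⟩) w, p.length = n := by
  intro n
  induction n with
  | zero =>
    intro w hw
    have hw0 : w = fun _ => ⟨0, hm⟩ := by
      funext i
      have := Finset.sum_eq_zero_iff.mp hw i (Finset.mem_univ i)
      exact Fin.ext (by simpa using this)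
    subst hw0
    exact ⟨SimpleGraph.Walk.nil, rfl⟩
  | succ n ih =>
    intro w hw
    have : ∃ i, 0 < (w i : ℕ) := by
      by_contra h
      push_neg at h
      have : ∑ i, (w i : ℕ) = 0 := Finset.sum_eq_zero (fun i _ => by have := h i; omega)
      omega
    obtain ⟨i, hi⟩ := this
    have hlt : (w i : ℕ) - 1 < m := by have := (w i).isLt; omega
    set w' : Fin d → Fin m := Function.update w i ⟨(w i : ℕ) - 1, hlt⟩ with hw'
    have hsum' : ∑ j, (w' j : ℕ) = n := by
      have h1 := Fintype.sum_eq_add_sum_compl i (fun j => (w j : ℕ))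
      have h2 := Fintype.sum_eq_add_sum_compl i (fun j => (w' j : ℕ))
      have he : ∑ j ∈ ({i}ᶜ : Finset (Fin d)), (w' j : ℕ)
          = ∑ j ∈ ({i}ᶜ : Finset (Fin d)), (w j : ℕ) :=
        Finset.sum_congr rfl (fun j hj => by
          rw [hw', Function.update_of_ne (by simpa using hj)])
      have hii : (w' i : ℕ) = (w i : ℕ) - 1 := by rw [hw', Function.update_self]
      omega
    have hadj : (gridGraph d m).Adj w' w := by
      refine ⟨i, Or.inl ?_, fun j hj => by rw [hw', Function.update_of_ne hj]⟩
      rw [hw', Function.update_self]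
      simp only []
      omega
    obtain ⟨p, hp⟩ := ih w' hsum'
    exact ⟨p.concat hadj, by rw [SimpleGraph.Walk.length_concat, hp]⟩

lemma my_dist_zero {d m : ℕ} (hm : 0 < m) (w : Fin d → Fin m) :
    (gridGraph d m).dist (fun _ => ⟨0, hm⟩) w = ∑ i, (w i : ℕ) := by
  obtain ⟨p, hp⟩ := my_exists_walk hm _ w rfl
  apply le_antisymm
  · exact hp ▸ SimpleGraph.dist_le p
  · have hr : (gridGraph d m).Reachable (fun _ => ⟨0, hm⟩) w := ⟨p⟩
    obtain ⟨q, hq⟩ := hr.exists_walk_length_eq_dist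
    have h2 := my_walk_sum_le q
    simp only [Fin.val_mk, Finset.sum_const_zero, zero_add] at h2
    omega

lemma my_count (m : ℕ) : ∀ (d t : ℕ), t < m →
    (Finset.univ.filter fun x : Fin d → Fin m => ∑ i, (x i : ℕ) ≤ t).card
      = (t + d).choose d := by
  intro d
  induction d with
  | zero =>
    intro t ht
    rw [Finset.filter_true_of_mem (fun x _ => by simp)]
    simp
  | succ d ih =>
    intro t ht
    rw [Finset.card_filter]
    rw [← Equiv.sum_comp (Fin.consEquiv (fun _ : Fin (d+1) => Fin m))
      (fun x => if ∑ i, (x i : ℕ) ≤ t then 1 else 0)]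
    rw [Fintype.sum_prod_type]
    have inner : ∀ a : Fin m,
        (∑ b : Fin d → Fin m,
          if ∑ i, ((Fin.consEquiv (fun _ : Fin (d+1) => Fin m)) (a, b) i : ℕ) ≤ t then 1 else 0)
        = if (a : ℕ) ≤ t then (t - (a : ℕ) + d).choose d else 0 := by
      intro a
      have hc : ∀ b : Fin d → Fin m,
          ∑ i, ((Fin.consEquiv (fun _ : Fin (d+1) => Fin m)) (a, b) i : ℕ)
            = (a : ℕ) + ∑ i, (b i : ℕ) := by
        intro b
        simp [Fin.consEquiv, Fin.sum_univ_succ]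
      by_cases ha : (a : ℕ) ≤ t
      · rw [if_pos ha, ← ih (t - (a : ℕ)) (by omega), Finset.card_filter]
        refine Finset.sum_congr rfl fun b _ => ?_
        rw [hc b]
        have : ((a : ℕ) + ∑ i, (b i : ℕ) ≤ t) ↔ (∑ i, (b i : ℕ) ≤ t - (a : ℕ)) := by omega
        simp [this]
      · rw [if_neg ha]
        refine Finset.sum_eq_zero fun b _ => ?_
        rw [hc b, if_neg (by omega)]
    rw [Finset.sum_congr rfl (fun a _ => inner a)]
    rw [Fin.sum_univ_eq_sum_range (fun a => if a ≤ t then (t - a + d).choose d else 0) m]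
    rw [← Finset.sum_subset (Finset.range_subset_range.mpr (by omega : t + 1 ≤ m))
      (fun x _ hx => if_neg (by simp at hx ⊢; omega))]
    rw [Finset.sum_congr rfl (fun a ha => if_pos (by simp at ha; omega))]
    have hrefl := Finset.sum_range_reflect (fun a => (a + d).choose d) (t + 1)
    simp only [Nat.add_sub_cancel] at hrefl
    rw [hrefl]
    have hshift : ∑ a ∈ Finset.range (t+1), (a + d).choose d
        = ∑ s ∈ Finset.Icc d (t + d), s.choose d := by
      refine Finset.sum_nbij' (fun a => a + d) (fun s => s - d) ?_ ?_ ?_ ?_ ?_ <;>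
        intros <;> simp_all <;> omega
    rw [hshift, Nat.sum_Icc_choose, Nat.add_assoc]

lemma my_ball_ncard {d m : ℕ} (hm : 0 < m) (t : ℕ) (ht : t < m) :
    ((gridGraph d m).hopBall (fun _ => ⟨0, hm⟩) t).ncard = (t + d).choose d := by
  have hset : (gridGraph d m).hopBall (fun _ => ⟨0, hm⟩) t
      = {w : Fin d → Fin m | ∑ i, (w i : ℕ) ≤ t} := by
    ext w
    simp only [SimpleGraph.hopBall, Set.mem_setOf_eq, my_dist_zero hm]
  rw [hset, Set.ncard_eq_toFinset_card', Set.toFinset_setOf, my_count m d t ht]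

theorem gridGraph_Tk_corner (d m : ℕ) (hd : 1 ≤ d) (hm : 2 ≤ m) (k : ℕ) (hk : 1 ≤ k)
    (tstar : ℕ) (ht1 : 1 ≤ tstar) (ht2 : tstar < m) (ht3 : k ≤ tstar * (tstar + d).choose d)
    (htmin : ∀ t : ℕ, 1 ≤ t → t < m → k ≤ t * (t + d).choose d → tstar ≤ t) :
    (gridGraph d m).broadcastQuality k (fun _ => (⟨0, by omega⟩ : Fin m)) = tstar := by
  have hm0 : 0 < m := by omega
  set z : Fin d → Fin m := fun _ => (⟨0, by omega⟩ : Fin m) with hz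
  have hzz : z = fun _ => (⟨0, hm0⟩ : Fin m) := rfl
  -- the ball cardinality for radii < m
  have hball : ∀ t : ℕ, t < m → ((gridGraph d m).hopBall z t).ncard = (t + d).choose d := by
    intro t ht
    rw [hzz]
    exact my_ball_ncard hm0 t ht
  -- diam lower bound: tstar ≤ diam
  have hdiam : tstar ≤ (gridGraph d m).diam := by
    -- ediam is finite
    have hbd : ∀ u v : Fin d → Fin m,
        (gridGraph d m).edist u v ≤ ((2 * (d * (m - 1)) : ℕ) : ℕ∞) := by
      intro u v
      have hsum : ∀ w : Fin d → Fin m, ∑ i, (w i : ℕ) ≤ d * (m - 1) := by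
        intro w
        calc ∑ i, (w i : ℕ) ≤ ∑ _i : Fin d, (m - 1) :=
              Finset.sum_le_sum (fun i _ => by have := (w i).isLt; omega)
          _ = d * (m - 1) := by simp [Finset.sum_const, mul_comm]
      obtain ⟨p, hp⟩ := my_exists_walk hm0 _ u rfl
      obtain ⟨q, hq⟩ := my_exists_walk hm0 _ v rfl
      calc (gridGraph d m).edist u v
          ≤ (gridGraph d m).edist u (fun _ => ⟨0, hm0⟩)
            + (gridGraph d m).edist (fun _ => ⟨0, hm0⟩) v := SimpleGraph.edist_triangle
        _ ≤ (p.length : ℕ∞) + (q.length : ℕ∞) := by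
            gcongr
            · rw [SimpleGraph.edist_comm]
              exact SimpleGraph.edist_le p
            · exact SimpleGraph.edist_le q
        _ ≤ ((2 * (d * (m - 1)) : ℕ) : ℕ∞) := by
            rw [hp, hq, ← Nat.cast_add]
            exact_mod_cast by have := hsum u; have := hsum v; omega
    have hne : (gridGraph d m).ediam ≠ ⊤ := by
      have := SimpleGraph.ediam_le_of_edist_le hbd
      exact ne_top_of_le_ne_top (ENat.coe_ne_top _) this
    -- a vertex at distance m - 1 from z
    set e1 : Fin d → Fin m := Function.update z ⟨0, hd⟩ ⟨m - 1, by omega⟩ with he1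
    have hsum1 : ∑ i, (e1 i : ℕ) = m - 1 := by
      have h1 := Fintype.sum_eq_add_sum_compl (⟨0, hd⟩ : Fin d) (fun j => (e1 j : ℕ))
      have h2 : ∑ j ∈ ({(⟨0, hd⟩ : Fin d)}ᶜ : Finset (Fin d)), (e1 j : ℕ) = 0 :=
        Finset.sum_eq_zero fun j hj => by
          rw [he1, Function.update_of_ne (by simpa using hj)]
      have h3 : (e1 ⟨0, hd⟩ : ℕ) = m - 1 := by rw [he1, Function.update_self]
      omega
    have hdist1 : (gridGraph d m).dist z e1 = m - 1 := by
      rw [hzz, my_dist_zero hm0, hsum1]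
    have := (gridGraph d m).dist_le_diam hne (u := z) (v := e1)
    omega
  -- now compute the sInf
  unfold SimpleGraph.broadcastQuality
  apply le_antisymm
  · apply Nat.sInf_le
    refine Or.inl ⟨ht1, ?_⟩
    rw [hball tstar ht2]
    exact ht3
  · refine le_csInf ⟨(gridGraph d m).diam, Or.inr rfl⟩ ?_
    rintro x (⟨hx1, hx2⟩ | hxd)
    · by_cases hxm : x < m
      · exact htmin x hx1 hxm (by rwa [hball x hxm] at hx2)
      · omega
    · simp only [Set.mem_singleton_iff] at hxd
      omega
end
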